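/- Suppose the cost functional L : X^{N+2} × U^{N+1} → ℝ is bounded below and upper semicontinuous, the dynamics F_k(·,·,ω) are continuous, the constraint maps g^k_i and θ_i are upper semicontinuous and bounded below, X is a finite-dimensional Banach space, and U is a nonempty compact metric space. Then for any ξ and c ∈ ℝ^m: c ∈ S(ξ) if and only if the robust constrained optimal value v_ξ(c) = sup over admissible controls u of inf over scenarios w of L(x_ξ^w(u), u) is finite. Moreover, in that case the supremum is attained by some optimal control. -/

import Mathlib

/-- Trajectory of the discrete-time control system `x_{k+1} = F_k(x_k, u_k, ω_k)`, `x_0 = ξ`. -/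
def traj {X U W : Type*} (F : ℕ → X → U → W → X) (ξ : X) (u : ℕ → U) (w : ℕ → W) : ℕ → X
  | 0 => ξ
  | k + 1 => F k (traj F ξ u w k) (u k) (w k)

/-- `u` is admissible for `(ξ, c)`: for every scenario, the mixed and end-point
constraints hold (componentwise, thresholds `c`). -/
def Adm {X U W : Type*} {m : ℕ} (N : ℕ) (F : ℕ → X → U → W → X) (Ω : ℕ → Set W)
    (g : ℕ → X → U → Fin m → ℝ) (θ : X → Fin m → ℝ) (ξ : X) (c : Fin m → ℝ)
    (u : ℕ → U) : Prop :=
  ∀ w : ℕ → W, (∀ k, w k ∈ Ω k) →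
    (∀ k ≤ N, c ≤ g k (traj F ξ u w k) (u k)) ∧ c ≤ θ (traj F ξ u w (N + 1))

/-- The set of robust sustainable thresholds `S(ξ)`. -/
def SST {X U W : Type*} {m : ℕ} (N : ℕ) (F : ℕ → X → U → W → X) (Ω : ℕ → Set W)
    (g : ℕ → X → U → Fin m → ℝ) (θ : X → Fin m → ℝ) (ξ : X) : Set (Fin m → ℝ) :=
  {c | ∃ u : ℕ → U, Adm N F Ω g θ ξ c u}

/-- A USC real function attains its maximum on a nonempty compact set. -/
lemma usc_exists_max {β : Type*} [TopologicalSpace β] {A : Set β} (hA : IsCompact A)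
    (hne : A.Nonempty) {J : β → ℝ} (hJ : UpperSemicontinuous J) :
    ∃ u ∈ A, ∀ u' ∈ A, J u' ≤ J u := by
  by_contra h
  push_neg at h
  have hcover : A ⊆ ⋃ u' : A, {x | J x < J u'.1} := by
    intro u hu
    obtain ⟨u', hu', hlt⟩ := h u hu
    exact Set.mem_iUnion.2 ⟨⟨u', hu'⟩, hlt⟩
  obtain ⟨t, ht⟩ := hA.elim_finite_subcover (fun u' : A => {x | J x < J u'.1})
    (fun u' => hJ.isOpen_preimage (J u'.1)) hcover
  obtain ⟨u0, hu0⟩ := hne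
  have htne : t.Nonempty := by
    obtain ⟨i, hi, -⟩ := Set.mem_iUnion₂.1 (ht hu0)
    exact ⟨i, hi⟩
  obtain ⟨v, hvt, hvmax⟩ := t.exists_max_image (fun u' : A => J u'.1) htne
  obtain ⟨v', hv't, hlt⟩ := Set.mem_iUnion₂.1 (ht v.2)
  exact absurd (hvmax v' hv't) (not_le.2 hlt)

/-- Under the standing assumptions and for a bounded-below, upper semicontinuous cost `L`,
`c ∈ S(ξ)` iff the robust constrained optimal value is finite, and in that case the
supremum is attained by some admissible control. -/
theorem stmt3 {X U W : Type*} [NormedAddCommGroup X] [NormedSpace ℝ X] [FiniteDimensional ℝ X]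
    [MetricSpace U] [CompactSpace U] [Nonempty U]
    {m N : ℕ} (F : ℕ → X → U → W → X) (Ω : ℕ → Set W) (hΩ : ∀ k, (Ω k).Nonempty)
    (g : ℕ → X → U → Fin m → ℝ) (θ : X → Fin m → ℝ)
    (hF : ∀ k, ∀ ω ∈ Ω k, Continuous fun p : X × U => F k p.1 p.2 ω)
    (hg_usc : ∀ k i, UpperSemicontinuous fun p : X × U => g k p.1 p.2 i)
    (hg_bdd : ∀ k i, BddBelow (Set.range fun p : X × U => g k p.1 p.2 i))
    (hθ_usc : ∀ i, UpperSemicontinuous fun x => θ x i)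
    (hθ_bdd : ∀ i, BddBelow (Set.range fun x => θ x i))
    (L : (ℕ → X) → (ℕ → U) → ℝ)
    (hL_usc : UpperSemicontinuous fun p : (ℕ → X) × (ℕ → U) => L p.1 p.2)
    (hL_bdd : ∃ M : ℝ, ∀ x u, M ≤ L x u)
    (ξ : X) (c : Fin m → ℝ) :
    (c ∈ SST N F Ω g θ ξ ↔
      ∃ r : ℝ, sSup {v : EReal | ∃ u : ℕ → U, Adm N F Ω g θ ξ c u ∧
        v = ((⨅ w : {w : ℕ → W // ∀ k, w k ∈ Ω k}, L (traj F ξ u w.1) u : ℝ) : EReal)}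
        = (r : EReal)) ∧
    (c ∈ SST N F Ω g θ ξ → ∃ u : ℕ → U, Adm N F Ω g θ ξ c u ∧
      ∀ u' : ℕ → U, Adm N F Ω g θ ξ c u' →
        (⨅ w : {w : ℕ → W // ∀ k, w k ∈ Ω k}, L (traj F ξ u' w.1) u') ≤
        ⨅ w : {w : ℕ → W // ∀ k, w k ∈ Ω k}, L (traj F ξ u w.1) u) := by
  classical
  obtain ⟨M, hM⟩ := hL_bdd
  have hSc : Nonempty {w : ℕ → W // ∀ k, w k ∈ Ω k} :=
    ⟨⟨fun k => (hΩ k).choose, fun k => (hΩ k).choose_spec⟩⟩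
  set J : (ℕ → U) → ℝ :=
    fun u => ⨅ w : {w : ℕ → W // ∀ k, w k ∈ Ω k}, L (traj F ξ u w.1) u with hJdef
  -- continuity of the trajectory in the control
  have htraj : ∀ (w : ℕ → W), (∀ k, w k ∈ Ω k) →
      ∀ k, Continuous fun u : ℕ → U => traj F ξ u w k := by
    intro w hw k
    induction k with
    | zero => exact continuous_const
    | succ k ih =>
      exact (hF k (w k) (hw k)).comp (ih.prodMk (continuous_apply k))
  have hbdd : ∀ u : ℕ → U,
      BddBelow (Set.range fun w : {w : ℕ → W // ∀ k, w k ∈ Ω k} => L (traj F ξ u w.1) u) :=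
    fun u => ⟨M, by rintro _ ⟨w, rfl⟩; exact hM _ _⟩
  -- USC of J
  have hfw : ∀ (w : ℕ → W), (∀ k, w k ∈ Ω k) →
      UpperSemicontinuous fun u : ℕ → U => L (traj F ξ u w) u := by
    intro w hw
    exact upperSemicontinuous_iff_isOpen_preimage.2 fun y => (hL_usc.isOpen_preimage y).preimage
      ((continuous_pi (htraj w hw)).prodMk continuous_id)
  have hJusc : UpperSemicontinuous J := by
    rw [upperSemicontinuous_iff_isOpen_preimage]
    intro y
    have hset : J ⁻¹' Set.Iio y =
        ⋃ w : {w : ℕ → W // ∀ k, w k ∈ Ω k}, {u | L (traj F ξ u w.1) u < y} := by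
      ext u
      simp only [Set.mem_preimage, Set.mem_Iio, Set.mem_iUnion, Set.mem_setOf_eq]
      constructor
      · intro h
        exact exists_lt_of_ciInf_lt h
      · rintro ⟨w, hw⟩
        exact lt_of_le_of_lt (ciInf_le (hbdd u) w) hw
    rw [hset]
    exact isOpen_iUnion fun w => (hfw w.1 w.2).isOpen_preimage y
  -- the admissible set is closed, hence compact
  have hclosed : IsClosed {u : ℕ → U | Adm N F Ω g θ ξ c u} := by
    have hset : {u : ℕ → U | Adm N F Ω g θ ξ c u} =
        ⋂ (w : {w : ℕ → W // ∀ k, w k ∈ Ω k}),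
          ((⋂ k, ⋂ (_ : k ≤ N), ⋂ i, {u : ℕ → U | c i ≤ g k (traj F ξ u w.1 k) (u k) i}) ∩
            ⋂ i, {u : ℕ → U | c i ≤ θ (traj F ξ u w.1 (N + 1)) i}) := by
      ext u
      simp only [Set.mem_setOf_eq, Set.mem_iInter, Set.mem_inter_iff, Adm, Pi.le_def]
      constructor
      · intro h w
        exact ⟨fun k hk i => (h w.1 w.2).1 k hk i, fun i => (h w.1 w.2).2 i⟩
      · intro h w hw
        exact ⟨fun k hk i => (h ⟨w, hw⟩).1 k hk i, fun i => (h ⟨w, hw⟩).2 i⟩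
    rw [hset]
    refine isClosed_iInter fun w => IsClosed.inter ?_ ?_
    · refine isClosed_iInter fun k => isClosed_iInter fun _ => isClosed_iInter fun i => ?_
      have husc : UpperSemicontinuous fun u : ℕ → U => g k (traj F ξ u w.1 k) (u k) i :=
        upperSemicontinuous_iff_isOpen_preimage.2 fun y => ((hg_usc k i).isOpen_preimage y).preimage ((htraj w.1 w.2 k).prodMk (continuous_apply k))
      exact husc.isClosed_preimage (c i)
    · refine isClosed_iInter fun i => ?_
      have husc : UpperSemicontinuous fun u : ℕ → U => θ (traj F ξ u w.1 (N + 1)) i :=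
        upperSemicontinuous_iff_isOpen_preimage.2 fun y => ((hθ_usc i).isOpen_preimage y).preimage (htraj w.1 w.2 (N + 1))
      exact husc.isClosed_preimage (c i)
  -- existence of an optimal control
  have hmax : c ∈ SST N F Ω g θ ξ → ∃ u : ℕ → U, Adm N F Ω g θ ξ c u ∧
      ∀ u' : ℕ → U, Adm N F Ω g θ ξ c u' → J u' ≤ J u := by
    rintro ⟨u0, hu0⟩
    obtain ⟨u, hu, hopt⟩ := usc_exists_max hclosed.isCompact ⟨u0, hu0⟩ hJusc
    exact ⟨u, hu, fun u' hu' => hopt u' hu'⟩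
  constructor
  · constructor
    · intro hc
      obtain ⟨u, hu, hopt⟩ := hmax hc
      refine ⟨J u, le_antisymm ?_ ?_⟩
      · refine sSup_le ?_
        rintro v ⟨u', hu', rfl⟩
        exact EReal.coe_le_coe_iff.2 (hopt u' hu')
      · exact le_sSup ⟨u, hu, rfl⟩
    · rintro ⟨r, hr⟩
      by_contra hne
      have hempty : {v : EReal | ∃ u : ℕ → U, Adm N F Ω g θ ξ c u ∧
          v = ((⨅ w : {w : ℕ → W // ∀ k, w k ∈ Ω k}, L (traj F ξ u w.1) u : ℝ) : EReal)} = ∅ := by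
        ext v
        simp only [Set.mem_setOf_eq, Set.mem_empty_iff_false, iff_false, not_exists]
        intro u hu
        exact absurd ⟨u, hu.1⟩ hne
      rw [hempty, sSup_empty] at hr
      exact (EReal.bot_lt_coe r).ne hr
  · exact hmax
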